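/- Let K be an atomic amalgam of a pasted family of Kleene lattices containing no atomic loop of order 3. If x, y lie in a common block K_i, then the join of x and y computed in K_i is the least upper bound of x and y in the amalgam K. -/
import Mathlib


/-- A pasted family of finite Kleene lattices over a common carrier `K`,
indexed by `ι`.  Each block `blk i` carries a bounded distributive lattice
structure `(le i, inf i, sup i, bot, top)` with an antitone involution `compl`
which is paraorthomodular and regular (i.e. each block is a Kleene lattice)
and has at least 6 elements.  Any two distinct blocks intersect either in
`{bot, top}` or in a common atomic Kleene subalgebra of at most 4 elements on
which the operations coincide and whose elements other than `bot`, `top` are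
simultaneously atoms or simultaneously coatoms of both blocks. -/
structure PastedFamily (K : Type*) (ι : Type*) where
  blk : ι → Set K
  cover : ∀ x : K, ∃ i, x ∈ blk i
  le : ι → K → K → Prop
  inf : ι → K → K → K
  sup : ι → K → K → K
  compl : K → K
  bot : K
  top : K
  bot_mem : ∀ i, bot ∈ blk i
  top_mem : ∀ i, top ∈ blk i
  finite : ∀ i, (blk i).Finite
  card6 : ∀ i, 6 ≤ (blk i).ncard
  le_refl : ∀ i x, x ∈ blk i → le i x x
  le_antisymm' : ∀ i x y, le i x y → le i y x → x = y
  le_trans' : ∀ i x y z, le i x y → le i y z → le i x z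
  bot_le : ∀ i x, x ∈ blk i → le i bot x
  le_top : ∀ i x, x ∈ blk i → le i x top
  inf_mem : ∀ i x y, x ∈ blk i → y ∈ blk i → inf i x y ∈ blk i
  sup_mem : ∀ i x y, x ∈ blk i → y ∈ blk i → sup i x y ∈ blk i
  inf_le_left : ∀ i x y, x ∈ blk i → y ∈ blk i → le i (inf i x y) x
  inf_le_right : ∀ i x y, x ∈ blk i → y ∈ blk i → le i (inf i x y) y
  le_inf : ∀ i x y z, x ∈ blk i → y ∈ blk i → z ∈ blk i →
    le i z x → le i z y → le i z (inf i x y)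
  le_sup_left : ∀ i x y, x ∈ blk i → y ∈ blk i → le i x (sup i x y)
  le_sup_right : ∀ i x y, x ∈ blk i → y ∈ blk i → le i y (sup i x y)
  sup_le : ∀ i x y z, x ∈ blk i → y ∈ blk i → z ∈ blk i →
    le i x z → le i y z → le i (sup i x y) z
  distrib : ∀ i x y z, x ∈ blk i → y ∈ blk i → z ∈ blk i →
    inf i x (sup i y z) = sup i (inf i x y) (inf i x z)
  compl_mem : ∀ i x, x ∈ blk i → compl x ∈ blk i
  compl_antitone : ∀ i x y, x ∈ blk i → y ∈ blk i → le i x y →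
    le i (compl y) (compl x)
  compl_invol : ∀ x, compl (compl x) = x
  /-- Each block is paraorthomodular. -/
  blockParaOM : ∀ i x y, x ∈ blk i → y ∈ blk i → le i x y →
    inf i (compl x) y = bot → x = y
  /-- Each block is regular (Kleene condition). -/
  regular : ∀ i x y, x ∈ blk i → y ∈ blk i →
    le i (inf i x (compl x)) (sup i y (compl y))
  /-- The block orders agree on intersections of blocks. -/
  le_compat : ∀ i j x y, x ∈ blk i → y ∈ blk i → x ∈ blk j → y ∈ blk j →
    le i x y → le j x y
  /-- Pasting condition on the intersection of two distinct blocks. -/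
  inter : ∀ i j, i ≠ j → blk i ∩ blk j = {bot, top} ∨
    ((blk i ∩ blk j).ncard ≤ 4 ∧
     bot ∈ blk i ∩ blk j ∧ top ∈ blk i ∩ blk j ∧
     (∀ x ∈ blk i ∩ blk j, compl x ∈ blk i ∩ blk j) ∧
     (∀ x y, x ∈ blk i ∩ blk j → y ∈ blk i ∩ blk j →
       inf i x y = inf j x y ∧ inf i x y ∈ blk i ∩ blk j ∧
       sup i x y = sup j x y ∧ sup i x y ∈ blk i ∩ blk j) ∧
     (∀ x ∈ blk i ∩ blk j, x ≠ bot → x ≠ top →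
       ((x ≠ bot ∧ ∀ z ∈ blk i, le i z x → z = bot ∨ z = x) ∧
        (x ≠ bot ∧ ∀ z ∈ blk j, le j z x → z = bot ∨ z = x)) ∨
       ((x ≠ top ∧ ∀ z ∈ blk i, le i x z → z = top ∨ z = x) ∧
        (x ≠ top ∧ ∀ z ∈ blk j, le j x z → z = top ∨ z = x))))

namespace PastedFamily

variable {K ι : Type*} (A : PastedFamily K ι)

/-- The order of the atomic amalgam: `x ≤ y` iff `x ≤ y` in some block. -/
def gle (x y : K) : Prop := ∃ i, x ∈ A.blk i ∧ y ∈ A.blk i ∧ A.le i x y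

/-- `s` is the least upper bound of `x` and `y` in the amalgam. -/
def IsLubA (x y s : K) : Prop :=
  A.gle x s ∧ A.gle y s ∧ ∀ z, A.gle x z → A.gle y z → A.gle s z

/-- `m` is the greatest lower bound of `x` and `y` in the amalgam. -/
def IsGlbA (x y m : K) : Prop :=
  A.gle m x ∧ A.gle m y ∧ ∀ z, A.gle z x → A.gle z y → A.gle z m

/-- Paraorthomodularity of the amalgam: `x ≤ y` and `x' ∧ y = 0`
(i.e. the lower cone `L(x', y)` is `{0}`) imply `x = y`. -/
def ParaOM : Prop := ∀ x y, A.gle x y →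
  (∀ z, A.gle z (A.compl x) → A.gle z y → z = A.bot) → x = y

/-- Blocks `i, j, k` form an atomic loop of order 3: consecutive (cyclic)
intersections have exactly 4 elements and the triple intersection is `{0,1}`. -/
def AtomicLoop3 (i j k : ι) : Prop :=
  (A.blk i ∩ A.blk j).ncard = 4 ∧ (A.blk j ∩ A.blk k).ncard = 4 ∧
  (A.blk k ∩ A.blk i).ncard = 4 ∧
  A.blk i ∩ A.blk j ∩ A.blk k = {A.bot, A.top}

/-- Blocks `i, j, k, l` form an atomic loop of order 4. -/
def AtomicLoop4 (i j k l : ι) : Prop :=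
  (A.blk i ∩ A.blk j).ncard = 4 ∧ (A.blk j ∩ A.blk k).ncard = 4 ∧
  (A.blk k ∩ A.blk l).ncard = 4 ∧ (A.blk l ∩ A.blk i).ncard = 4 ∧
  A.blk i ∩ A.blk k = {A.bot, A.top} ∧ A.blk j ∩ A.blk l = {A.bot, A.top} ∧
  A.blk i ∩ A.blk j ∩ A.blk k = {A.bot, A.top} ∧
  A.blk i ∩ A.blk j ∩ A.blk l = {A.bot, A.top} ∧
  A.blk i ∩ A.blk k ∩ A.blk l = {A.bot, A.top} ∧
  A.blk j ∩ A.blk k ∩ A.blk l = {A.bot, A.top}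

end PastedFamily

namespace PastedFamily

variable {K ι : Type*} (A : PastedFamily K ι)

lemma bot_ne_top' (i : ι) : A.bot ≠ A.top := by
  intro h
  have hsub : A.blk i ⊆ {A.bot} := by
    intro w hw
    have h1 := A.bot_le i w hw
    have h2 := A.le_top i w hw
    have : w = A.bot := A.le_antisymm' i w A.bot (h ▸ h2) h1
    simp [this]
  have hle := Set.ncard_le_ncard hsub (Set.finite_singleton _)
  have h6 := A.card6 i
  rw [Set.ncard_singleton] at hle
  omega

lemma compl_top' (i : ι) : A.compl A.top = A.bot := by
  have hm : A.compl A.bot ∈ A.blk i := A.compl_mem i A.bot (A.bot_mem i)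
  have h1 : A.le i (A.compl A.top) (A.compl (A.compl A.bot)) :=
    A.compl_antitone i (A.compl A.bot) A.top hm (A.top_mem i) (A.le_top i _ hm)
  rw [A.compl_invol] at h1
  exact A.le_antisymm' i _ _ h1
    (A.bot_le i _ (A.compl_mem i A.top (A.top_mem i)))

lemma compl_bot' (i : ι) : A.compl A.bot = A.top := by
  rw [← A.compl_top' i, A.compl_invol]

lemma sup_eq_left' (i : ι) (x y : K) (hx : x ∈ A.blk i) (hy : y ∈ A.blk i)
    (h : A.le i y x) : A.sup i x y = x :=
  A.le_antisymm' i _ _ (A.sup_le i x y x hx hy hx (A.le_refl i x hx) h)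
    (A.le_sup_left i x y hx hy)

lemma sup_eq_right' (i : ι) (x y : K) (hx : x ∈ A.blk i) (hy : y ∈ A.blk i)
    (h : A.le i x y) : A.sup i x y = y :=
  A.le_antisymm' i _ _ (A.sup_le i x y y hx hy hy h (A.le_refl i y hy))
    (A.le_sup_right i x y hx hy)

/-- No atom or coatom of a block can be a fixed point of the involution. -/
lemma nofix (i : ι) (t : K) (ht : t ∈ A.blk i) (hb : t ≠ A.bot)
    (hat : (∀ z ∈ A.blk i, A.le i z t → z = A.bot ∨ z = t) ∨
           (∀ z ∈ A.blk i, A.le i t z → z = A.top ∨ z = t))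
    (hc : A.compl t = t) : False := by
  -- t is an atom
  have hatom : ∀ z ∈ A.blk i, A.le i z t → z = A.bot ∨ z = t := by
    rcases hat with h | h
    · exact h
    · intro z hz hzt
      have h1 : A.le i (A.compl t) (A.compl z) := A.compl_antitone i z t hz ht hzt
      rw [hc] at h1
      rcases h (A.compl z) (A.compl_mem i z hz) h1 with h2 | h2
      · left
        have := congrArg A.compl h2
        rwa [A.compl_invol, A.compl_top' i] at this
      · right
        have := congrArg A.compl h2
        rwa [A.compl_invol, hc] at this
  have hcoatom : ∀ z ∈ A.blk i, A.le i t z → z = A.top ∨ z = t := by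
    intro z hz htz
    have h1 : A.le i (A.compl z) (A.compl t) := A.compl_antitone i t z ht hz htz
    rw [hc] at h1
    rcases hatom (A.compl z) (A.compl_mem i z hz) h1 with h2 | h2
    · left
      have := congrArg A.compl h2
      rwa [A.compl_invol, A.compl_bot' i] at this
    · right
      have := congrArg A.compl h2
      rwa [A.compl_invol, hc] at this
  -- every element of the block is comparable with t
  have hcmp : ∀ w ∈ A.blk i, w = A.bot ∨ w = t ∨ w = A.top := by
    intro w hw
    by_cases h1 : A.le i w t
    · rcases hatom w hw h1 with h | h
      · exact Or.inl h
      · exact Or.inr (Or.inl h)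
    by_cases h2 : A.le i t w
    · rcases hcoatom w hw h2 with h | h
      · exact Or.inr (Or.inr h)
      · exact Or.inr (Or.inl h)
    exfalso
    have hw' : A.compl w ∈ A.blk i := A.compl_mem i w hw
    have hiw : A.inf i t w ∈ A.blk i := A.inf_mem i t w ht hw
    have hi1 : A.inf i t w = A.bot := by
      rcases hatom (A.inf i t w) hiw (A.inf_le_left i t w ht hw) with h | h
      · exact h
      · exfalso; apply h2
        have := A.inf_le_right i t w ht hw
        rwa [h] at this
    have hi2 : A.inf i t (A.compl w) = A.bot := by
      rcases hatom (A.inf i t (A.compl w)) (A.inf_mem i t _ ht hw')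
          (A.inf_le_left i t _ ht hw') with h | h
      · exact h
      · exfalso; apply h1
        have h3 : A.le i t (A.compl w) := by
          have := A.inf_le_right i t (A.compl w) ht hw'
          rwa [h] at this
        have h4 := A.compl_antitone i t (A.compl w) ht hw' h3
        rwa [A.compl_invol, hc] at h4
    have hreg := A.regular i t w ht hw
    have hidem : A.inf i t (A.compl t) = t := by
      rw [hc]
      exact A.le_antisymm' i _ _ (A.inf_le_left i t t ht ht)
        (A.le_inf i t t t ht ht ht (A.le_refl i t ht) (A.le_refl i t ht))
    rw [hidem] at hreg
    have hsm : A.sup i w (A.compl w) ∈ A.blk i := A.sup_mem i w _ hw hw'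
    have hkey : t = A.inf i t (A.sup i w (A.compl w)) :=
      A.le_antisymm' i _ _
        (A.le_inf i t (A.sup i w (A.compl w)) t ht hsm ht (A.le_refl i t ht) hreg)
        (A.inf_le_left i t _ ht hsm)
    rw [A.distrib i t w (A.compl w) ht hw hw', hi1, hi2] at hkey
    have hbb : A.sup i A.bot A.bot = A.bot :=
      A.sup_eq_left' i A.bot A.bot (A.bot_mem i) (A.bot_mem i)
        (A.le_refl i A.bot (A.bot_mem i))
    exact hb (hkey.trans hbb)
  -- the block has at most 3 elements: contradiction with card6
  have hsub : A.blk i ⊆ {A.bot, t, A.top} := by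
    intro w hw
    rcases hcmp w hw with h | h | h <;> simp [h]
  have hle := Set.ncard_le_ncard hsub (Set.toFinite _)
  have h1 := Set.ncard_insert_le A.bot ({t, A.top} : Set K)
  have h2 := Set.ncard_insert_le t ({A.top} : Set K)
  rw [Set.ncard_singleton] at h2
  have h6 := A.card6 i
  omega

/-- A nontrivial intersection of two blocks is exactly `{0, 1, t, t'}`. -/
lemma inter4 (i j : ι) (hij : i ≠ j) (t : K) (hti : t ∈ A.blk i)
    (htj : t ∈ A.blk j) (hb : t ≠ A.bot) (htp : t ≠ A.top) :
    A.blk i ∩ A.blk j = {A.bot, A.top, t, A.compl t} ∧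
      (A.blk i ∩ A.blk j).ncard = 4 := by
  rcases A.inter i j hij with h | ⟨h4, hbm, htm, hcm, _, hatomic⟩
  · exfalso
    have : t ∈ ({A.bot, A.top} : Set K) := h ▸ ⟨hti, htj⟩
    rcases this with h' | h'
    · exact hb h'
    · exact htp h'
  have hct : A.compl t ∈ A.blk i ∩ A.blk j := hcm t ⟨hti, htj⟩
  have hat := hatomic t ⟨hti, htj⟩ hb htp
  have hne : A.compl t ≠ t := by
    intro hceq
    apply A.nofix i t hti hb _ hceq
    rcases hat with ⟨⟨_, h⟩, _⟩ | ⟨⟨_, h⟩, _⟩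
    · exact Or.inl h
    · exact Or.inr h
  have hbt : A.bot ≠ A.top := A.bot_ne_top' i
  have hcb : A.compl t ≠ A.bot := by
    intro h
    apply htp
    have := congrArg A.compl h
    rwa [A.compl_invol, A.compl_bot' i] at this
  have hctp : A.compl t ≠ A.top := by
    intro h
    apply hb
    have := congrArg A.compl h
    rwa [A.compl_invol, A.compl_top' i] at this
  have hTsub : ({A.bot, A.top, t, A.compl t} : Set K) ⊆ A.blk i ∩ A.blk j := by
    intro w hw
    rcases hw with h | h | h | h
    · exact h ▸ hbm
    · exact h ▸ htm
    · exact h ▸ ⟨hti, htj⟩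
    · exact h ▸ hct
  have hTcard : ({A.bot, A.top, t, A.compl t} : Set K).ncard = 4 := by
    rw [Set.ncard_insert_of_notMem (by simp [hbt, hb.symm, hcb.symm]),
      Set.ncard_insert_of_notMem (by simp [htp.symm, hctp.symm]),
      Set.ncard_insert_of_notMem (by simp [Ne.symm hne]),
      Set.ncard_singleton]
  have hfin : (A.blk i ∩ A.blk j).Finite :=
    (A.finite i).subset Set.inter_subset_left
  have hS : ({A.bot, A.top, t, A.compl t} : Set K) = A.blk i ∩ A.blk j :=
    Set.eq_of_subset_of_ncard_le hTsub (by omega) hfin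
  exact ⟨hS.symm, by rw [← hS, hTcard]⟩

lemma sup_transport (i j : ι) (x y : K) (hxi : x ∈ A.blk i) (hyi : y ∈ A.blk i)
    (hxj : x ∈ A.blk j) (hyj : y ∈ A.blk j) (hxb : x ≠ A.bot) (hxt : x ≠ A.top) :
    A.sup i x y = A.sup j x y ∧ A.sup i x y ∈ A.blk j := by
  by_cases hij : i = j
  · subst hij; exact ⟨rfl, A.sup_mem i x y hxi hyi⟩
  rcases A.inter i j hij with h | ⟨_, _, _, _, hops, _⟩
  · exfalso
    have : x ∈ ({A.bot, A.top} : Set K) := h ▸ ⟨hxi, hxj⟩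
    rcases this with h' | h'
    · exact hxb h'
    · exact hxt h'
  obtain ⟨_, _, hseq, hsmem⟩ := hops x y ⟨hxi, hxj⟩ ⟨hyi, hyj⟩
  exact ⟨hseq, hsmem.2⟩

end PastedFamily


/-- In an atomic amalgam of Kleene lattices with no atomic loop of order 3,
the join of two elements of a common block, computed in that block, is the
least upper bound in the whole amalgam. -/
theorem stmt_12 {K ι : Type*} (A : PastedFamily K ι)
    (hnl : ∀ i j k : ι, ¬ A.AtomicLoop3 i j k)
    (i : ι) (x y : K) (hx : x ∈ A.blk i) (hy : y ∈ A.blk i) :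
    A.IsLubA x y (A.sup i x y) := by
  refine ⟨⟨i, hx, A.sup_mem i x y hx hy, A.le_sup_left i x y hx hy⟩,
    ⟨i, hy, A.sup_mem i x y hx hy, A.le_sup_right i x y hx hy⟩, ?_⟩
  intro z hxz hyz
  obtain ⟨j, hxj, hzj, hxzj⟩ := hxz
  obtain ⟨k, hyk, hzk, hyzk⟩ := hyz
  by_cases hxb : x = A.bot
  · have h : A.sup i x y = y :=
      A.sup_eq_right' i x y hx hy (by rw [hxb]; exact A.bot_le i y hy)
    rw [h]; exact ⟨k, hyk, hzk, hyzk⟩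
  by_cases hyb : y = A.bot
  · have h : A.sup i x y = x :=
      A.sup_eq_left' i x y hx hy (by rw [hyb]; exact A.bot_le i x hx)
    rw [h]; exact ⟨j, hxj, hzj, hxzj⟩
  by_cases hxt : x = A.top
  · have h : A.sup i x y = x :=
      A.sup_eq_left' i x y hx hy (by rw [hxt]; exact A.le_top i y hy)
    rw [h]; exact ⟨j, hxj, hzj, hxzj⟩
  by_cases hyt : y = A.top
  · have h : A.sup i x y = y :=
      A.sup_eq_right' i x y hx hy (by rw [hyt]; exact A.le_top i x hx)
    rw [h]; exact ⟨k, hyk, hzk, hyzk⟩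
  by_cases hzt : z = A.top
  · subst hzt
    exact ⟨i, A.sup_mem i x y hx hy, A.top_mem i,
      A.le_top i _ (A.sup_mem i x y hx hy)⟩
  by_cases hzi : z ∈ A.blk i
  · exact ⟨i, A.sup_mem i x y hx hy, hzi,
      A.sup_le i x y z hx hy hzi (A.le_compat j i x z hxj hzj hx hzi hxzj)
        (A.le_compat k i y z hyk hzk hy hzi hyzk)⟩
  have hij : i ≠ j := fun h => hzi (h ▸ hzj)
  have hik : i ≠ k := fun h => hzi (h ▸ hzk)
  by_cases hjk : j = k
  · subst hjk
    obtain ⟨heq, hmem⟩ := A.sup_transport i j x y hx hy hxj hyk hxb hxt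
    refine ⟨j, hmem, hzj, ?_⟩
    rw [heq]
    exact A.sup_le j x y z hxj hyk hzj hxzj hyzk
  have hzb : z ≠ A.bot := by
    intro h
    exact hxb (A.le_antisymm' j x A.bot (h ▸ hxzj) (A.bot_le j x hxj))
  exfalso
  apply hnl i j k
  obtain ⟨hSjk, hcard_jk⟩ := A.inter4 j k hjk z hzj hzk hzb hzt
  obtain ⟨_, hcard_ij⟩ := A.inter4 i j hij x hx hxj hxb hxt
  obtain ⟨_, hcard_ki⟩ := A.inter4 k i (fun h => hik h.symm) y hyk hy hyb hyt
  refine ⟨hcard_ij, hcard_jk, hcard_ki, ?_⟩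
  ext w
  constructor
  · rintro ⟨⟨hwi, hwj⟩, hwk⟩
    have hw4 : w ∈ ({A.bot, A.top, z, A.compl z} : Set K) := hSjk ▸ ⟨hwj, hwk⟩
    rcases hw4 with h | h | h | h
    · exact Or.inl h
    · exact Or.inr h
    · exact absurd (h ▸ hwi) hzi
    · exfalso
      apply hzi
      have : A.compl w = z := by rw [h, A.compl_invol]
      exact this ▸ A.compl_mem i w hwi
  · intro hw
    rcases hw with h | h
    · exact h ▸ ⟨⟨A.bot_mem i, A.bot_mem j⟩, A.bot_mem k⟩
    · exact h ▸ ⟨⟨A.top_mem i, A.top_mem j⟩, A.top_mem k⟩
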